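/- Let H ⊆ ℂ be open and connected, let t : H → ℂ and τ₂, τ₃ : H → ℂ be differentiable with τ₂'(τ) = -t(τ) and τ₃'(τ) = t(τ)², and set T(τ) = [[τ, τ₂(τ)],[τ₂(τ), τ₃(τ)]]. Let γ = [[A,B],[C,D]] ∈ Sp₄(ℝ) in 2×2 blocks and let σ : H → H be differentiable with C·T(τ) + D invertible and T(σ(τ)) = (A·T(τ) + B)·(C·T(τ) + D)⁻¹ for all τ ∈ H. Writing C·T(τ)+D = [[𝔞,𝔟],[𝔠,𝔡]], assume 𝔠·t(τ)+𝔡 ≠ 0. Then for all τ ∈ H: σ'(τ) = (𝔠·t(τ)+𝔡)² / det(C·T(τ)+D)², and t(σ(τ)) = (𝔞·t(τ)+𝔟)/(𝔠·t(τ)+𝔡). -/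

import Mathlib

open Matrix

/-- Coerce a real `2×2` matrix to a complex one. -/
def matC (A : Matrix (Fin 2) (Fin 2) ℝ) : Matrix (Fin 2) (Fin 2) ℂ :=
  A.map (fun x => (x : ℂ))

/-- The standard symplectic form matrix `J = [[0, -E], [E, 0]]` in `2×2` blocks, over `ℝ`. -/
def J2R : Matrix (Fin 2 ⊕ Fin 2) (Fin 2 ⊕ Fin 2) ℝ :=
  Matrix.fromBlocks 0 (-1) 1 0

/-- The symmetric matrix curve `T(τ) = [[τ, τ₂(τ)],[τ₂(τ), τ₃(τ)]]`. -/
def Tcurve (τ2 τ3 : ℂ → ℂ) : ℂ → Matrix (Fin 2) (Fin 2) ℂ :=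
  fun τ => !![τ, τ2 τ; τ2 τ, τ3 τ]

lemma sigma_algebra_aux
    (a00 a01 a10 a11 b00 b10 c00 c01 c10 c11 d00 d01 d10 d11 : ℂ)
    (x y z s ys zs t u e : ℂ)
    (hS1 : c00*a01 + c10*a11 = c01*a00 + c11*a10)
    (hS300 : d00*a00 + d10*a10 - (b00*c00 + b10*c10) = 1)
    (hS301 : d00*a01 + d10*a11 - (b00*c01 + b10*c11) = 0)
    (𝔞 𝔟 𝔠 𝔡 : ℂ)
    (hA : 𝔞 = c00*x+c01*y+d00) (hB : 𝔟 = c00*y+c01*z+d01)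
    (hC : 𝔠 = c10*x+c11*y+d10) (hD : 𝔡 = c10*y+c11*z+d11)
    (hO00 : s*𝔞 + ys*𝔠 = a00*x + a01*y + b00)
    (hO10 : ys*𝔞 + zs*𝔠 = a10*x + a11*y + b10)
    (hD00 : e*𝔞 + s*(c00 - c01*t) + (-u*e)*𝔠 + ys*(c10 - c11*t) = a00 - a01*t)
    (hD01 : e*𝔟 + s*(-(c00*t) + c01*t^2) + (-u*e)*𝔡 + ys*(-(c10*t) + c11*t^2)
        = -(a00*t) + a01*t^2)
    (hD10 : (-u*e)*𝔞 + ys*(c00 - c01*t) + (u^2*e)*𝔠 + zs*(c10 - c11*t) = a10 - a11*t)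
    (hD11 : (-u*e)*𝔟 + ys*(-(c00*t) + c01*t^2) + (u^2*e)*𝔡 + zs*(-(c10*t) + c11*t^2)
        = -(a10*t) + a11*t^2)
    (hcd : 𝔠*t + 𝔡 ≠ 0) (hdet : 𝔞*𝔡 - 𝔟*𝔠 ≠ 0) :
    e = (𝔠*t + 𝔡)^2/(𝔞*𝔡 - 𝔟*𝔠)^2 ∧ u = (𝔞*t + 𝔟)/(𝔠*t + 𝔡) := by
  have E1 : e*(𝔞 - 𝔠*u)^2 = 1 := by
    subst hA hB hC hD
    linear_combination (c00*x+c01*y+d00)*hD00 + (c10*x+c11*y+d10)*hD10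
      - (c00 - c01*t)*hO00 - (c10 - c11*t)*hO10 - (x*t+y)*hS1 + hS300 - t*hS301
  have E2 : e*(𝔞 - 𝔠*u)*(𝔟 - 𝔡*u) = -t := by
    subst hA hB hC hD
    linear_combination (c00*x+c01*y+d00)*hD01 + (c10*x+c11*y+d10)*hD11
      - (-(c00*t) + c01*t^2)*hO00 - (-(c10*t) + c11*t^2)*hO10
      + t*(x*t+y)*hS1 - t*hS300 + t^2*hS301
  have hne : 𝔞 - 𝔠*u ≠ 0 := by intro h; rw [h] at E1; simp at E1
  have he : e ≠ 0 := by intro h; rw [h] at E1; simp at E1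
  have hu' : 𝔟 - 𝔡*u = -t*(𝔞 - 𝔠*u) := by
    have h0 : e*(𝔞 - 𝔠*u)*((𝔟 - 𝔡*u) + t*(𝔞 - 𝔠*u)) = 0 := by
      linear_combination E2 + t*E1
    rcases mul_eq_zero.mp h0 with h | h
    · exact absurd h (mul_ne_zero he hne)
    · linear_combination h
  have G2 : u*(𝔠*t+𝔡) = 𝔞*t + 𝔟 := by linear_combination -hu'
  have hkey : (𝔞 - 𝔠*u)*(𝔠*t+𝔡) = 𝔞*𝔡 - 𝔟*𝔠 := by linear_combination -𝔠*G2
  constructor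
  · rw [eq_div_iff (pow_ne_zero 2 hdet)]
    linear_combination (𝔠*t+𝔡)^2 * E1
      - (e*((𝔞 - 𝔠*u)*(𝔠*t+𝔡) + (𝔞*𝔡 - 𝔟*𝔠))) * hkey
  · rw [eq_div_iff hcd]; exact G2

theorem sigma_deriv_and_t_transform
    (H : Set ℂ) (hH : IsOpen H) (hconn : IsConnected H)
    (t τ2 τ3 : ℂ → ℂ)
    (hτ2 : ∀ τ ∈ H, HasDerivAt τ2 (-(t τ)) τ)
    (hτ3 : ∀ τ ∈ H, HasDerivAt τ3 ((t τ) ^ 2) τ)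
    (A B C D : Matrix (Fin 2) (Fin 2) ℝ)
    (hsp : (Matrix.fromBlocks A B C D)ᵀ * J2R * Matrix.fromBlocks A B C D = J2R)
    (σ : ℂ → ℂ) (hσmap : Set.MapsTo σ H H)
    (hσdiff : ∀ τ ∈ H, DifferentiableAt ℂ σ τ)
    (hinv : ∀ τ ∈ H, IsUnit (matC C * Tcurve τ2 τ3 τ + matC D))
    (heq : ∀ τ ∈ H, Tcurve τ2 τ3 (σ τ)
      = (matC A * Tcurve τ2 τ3 τ + matC B) * (matC C * Tcurve τ2 τ3 τ + matC D)⁻¹)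
    (hcd : ∀ τ ∈ H,
      (matC C * Tcurve τ2 τ3 τ + matC D) 1 0 * t τ
        + (matC C * Tcurve τ2 τ3 τ + matC D) 1 1 ≠ 0) :
    ∀ τ ∈ H,
      deriv σ τ
        = ((matC C * Tcurve τ2 τ3 τ + matC D) 1 0 * t τ
            + (matC C * Tcurve τ2 τ3 τ + matC D) 1 1) ^ 2 /
          ((matC C * Tcurve τ2 τ3 τ + matC D).det) ^ 2 ∧
      t (σ τ)
        = ((matC C * Tcurve τ2 τ3 τ + matC D) 0 0 * t τ
            + (matC C * Tcurve τ2 τ3 τ + matC D) 0 1) /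
          ((matC C * Tcurve τ2 τ3 τ + matC D) 1 0 * t τ
            + (matC C * Tcurve τ2 τ3 τ + matC D) 1 1) := by
  -- scalar symplectic relations
  have hS1R : C 0 0 * A 0 1 + C 1 0 * A 1 1 = C 0 1 * A 0 0 + C 1 1 * A 1 0 := by
    have h := congrFun (congrFun hsp (Sum.inl 0)) (Sum.inl 1)
    simp [J2R, Matrix.mul_apply, Matrix.fromBlocks, Fin.sum_univ_two, Fintype.sum_sum_type,
      Matrix.transpose_apply] at h
    linarith
  have hS300R : D 0 0 * A 0 0 + D 1 0 * A 1 0 - (B 0 0 * C 0 0 + B 1 0 * C 1 0) = 1 := by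
    have h := congrFun (congrFun hsp (Sum.inr 0)) (Sum.inl 0)
    simp [J2R, Matrix.mul_apply, Matrix.fromBlocks, Fin.sum_univ_two, Fintype.sum_sum_type,
      Matrix.transpose_apply] at h
    linarith
  have hS301R : D 0 0 * A 0 1 + D 1 0 * A 1 1 - (B 0 0 * C 0 1 + B 1 0 * C 1 1) = 0 := by
    have h := congrFun (congrFun hsp (Sum.inr 0)) (Sum.inl 1)
    simp [J2R, Matrix.mul_apply, Matrix.fromBlocks, Fin.sum_univ_two, Fintype.sum_sum_type,
      Matrix.transpose_apply] at h
    linarith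
  have hS1 : (C 0 0 : ℂ) * (A 0 1 : ℂ) + (C 1 0 : ℂ) * (A 1 1 : ℂ)
      = (C 0 1 : ℂ) * (A 0 0 : ℂ) + (C 1 1 : ℂ) * (A 1 0 : ℂ) := by exact_mod_cast hS1R
  have hS300 : (D 0 0 : ℂ) * (A 0 0 : ℂ) + (D 1 0 : ℂ) * (A 1 0 : ℂ)
      - ((B 0 0 : ℂ) * (C 0 0 : ℂ) + (B 1 0 : ℂ) * (C 1 0 : ℂ)) = 1 := by exact_mod_cast hS300R
  have hS301 : (D 0 0 : ℂ) * (A 0 1 : ℂ) + (D 1 0 : ℂ) * (A 1 1 : ℂ)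
      - ((B 0 0 : ℂ) * (C 0 1 : ℂ) + (B 1 0 : ℂ) * (C 1 1 : ℂ)) = 0 := by exact_mod_cast hS301R
  -- the matrix functional equation multiplied out
  have hTM : ∀ τ' ∈ H, Tcurve τ2 τ3 (σ τ') * (matC C * Tcurve τ2 τ3 τ' + matC D)
      = matC A * Tcurve τ2 τ3 τ' + matC B := by
    intro τ' h'
    have hdet := (Matrix.isUnit_iff_isUnit_det _).mp (hinv τ' h')
    rw [heq τ' h', mul_assoc, Matrix.nonsing_inv_mul _ hdet, mul_one]
  -- scalar equations, entrywise
  have hO00fun : ∀ τ' ∈ H,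
      σ τ' * ((C 0 0 : ℂ)*τ' + (C 0 1 : ℂ)*τ2 τ' + (D 0 0 : ℂ))
        + τ2 (σ τ') * ((C 1 0 : ℂ)*τ' + (C 1 1 : ℂ)*τ2 τ' + (D 1 0 : ℂ))
      = (A 0 0 : ℂ)*τ' + (A 0 1 : ℂ)*τ2 τ' + (B 0 0 : ℂ) := by
    intro τ' h'
    have h := congrFun (congrFun (hTM τ' h') 0) 0
    simp [Tcurve, matC, Matrix.mul_apply, Fin.sum_univ_two, Matrix.add_apply,
      Matrix.map_apply] at h
    linear_combination h
  have hO01fun : ∀ τ' ∈ H,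
      σ τ' * ((C 0 0 : ℂ)*τ2 τ' + (C 0 1 : ℂ)*τ3 τ' + (D 0 1 : ℂ))
        + τ2 (σ τ') * ((C 1 0 : ℂ)*τ2 τ' + (C 1 1 : ℂ)*τ3 τ' + (D 1 1 : ℂ))
      = (A 0 0 : ℂ)*τ2 τ' + (A 0 1 : ℂ)*τ3 τ' + (B 0 1 : ℂ) := by
    intro τ' h'
    have h := congrFun (congrFun (hTM τ' h') 0) 1
    simp [Tcurve, matC, Matrix.mul_apply, Fin.sum_univ_two, Matrix.add_apply,
      Matrix.map_apply] at h
    linear_combination h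
  have hO10fun : ∀ τ' ∈ H,
      τ2 (σ τ') * ((C 0 0 : ℂ)*τ' + (C 0 1 : ℂ)*τ2 τ' + (D 0 0 : ℂ))
        + τ3 (σ τ') * ((C 1 0 : ℂ)*τ' + (C 1 1 : ℂ)*τ2 τ' + (D 1 0 : ℂ))
      = (A 1 0 : ℂ)*τ' + (A 1 1 : ℂ)*τ2 τ' + (B 1 0 : ℂ) := by
    intro τ' h'
    have h := congrFun (congrFun (hTM τ' h') 1) 0
    simp [Tcurve, matC, Matrix.mul_apply, Fin.sum_univ_two, Matrix.add_apply,
      Matrix.map_apply] at h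
    linear_combination h
  have hO11fun : ∀ τ' ∈ H,
      τ2 (σ τ') * ((C 0 0 : ℂ)*τ2 τ' + (C 0 1 : ℂ)*τ3 τ' + (D 0 1 : ℂ))
        + τ3 (σ τ') * ((C 1 0 : ℂ)*τ2 τ' + (C 1 1 : ℂ)*τ3 τ' + (D 1 1 : ℂ))
      = (A 1 0 : ℂ)*τ2 τ' + (A 1 1 : ℂ)*τ3 τ' + (B 1 1 : ℂ) := by
    intro τ' h'
    have h := congrFun (congrFun (hTM τ' h') 1) 1
    simp [Tcurve, matC, Matrix.mul_apply, Fin.sum_univ_two, Matrix.add_apply,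
      Matrix.map_apply] at h
    linear_combination h
  intro τ hτ
  -- derivative building blocks
  have hd_σ : HasDerivAt σ (deriv σ τ) τ := (hσdiff τ hτ).hasDerivAt
  have hd_2 : HasDerivAt τ2 (-(t τ)) τ := hτ2 τ hτ
  have hd_3 : HasDerivAt τ3 ((t τ)^2) τ := hτ3 τ hτ
  have hd_2σ : HasDerivAt (fun τ' => τ2 (σ τ')) (-(t (σ τ)) * deriv σ τ) τ :=
    (hτ2 (σ τ) (hσmap hτ)).comp τ hd_σ
  have hd_3σ : HasDerivAt (fun τ' => τ3 (σ τ')) ((t (σ τ))^2 * deriv σ τ) τ :=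
    (hτ3 (σ τ) (hσmap hτ)).comp τ hd_σ
  have hd_id : HasDerivAt (fun τ' : ℂ => τ') 1 τ := hasDerivAt_id τ
  have derivEq : ∀ {f g : ℂ → ℂ} {f' g' : ℂ}, HasDerivAt f f' τ → HasDerivAt g g' τ →
      (∀ τ' ∈ H, f τ' = g τ') → f' = g' := by
    intro f g f' g' hf hg hfg
    exact hf.unique (hg.congr_of_eventuallyEq
      (Filter.eventually_of_mem (hH.mem_nhds hτ) hfg))
  -- differentiated scalar equations
  have hD00 : deriv σ τ * ((C 0 0 : ℂ)*τ + (C 0 1 : ℂ)*τ2 τ + (D 0 0 : ℂ))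
      + σ τ * ((C 0 0 : ℂ) - (C 0 1 : ℂ)*t τ)
      + (-(t (σ τ)) * deriv σ τ) * ((C 1 0 : ℂ)*τ + (C 1 1 : ℂ)*τ2 τ + (D 1 0 : ℂ))
      + τ2 (σ τ) * ((C 1 0 : ℂ) - (C 1 1 : ℂ)*t τ)
      = (A 0 0 : ℂ) - (A 0 1 : ℂ)*t τ := by
    have h := derivEq
      ((hd_σ.mul (((hd_id.const_mul (C 0 0 : ℂ)).add (hd_2.const_mul (C 0 1 : ℂ))).add_const
        (D 0 0 : ℂ))).add
       (hd_2σ.mul (((hd_id.const_mul (C 1 0 : ℂ)).add (hd_2.const_mul (C 1 1 : ℂ))).add_const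
        (D 1 0 : ℂ))))
      (((hd_id.const_mul (A 0 0 : ℂ)).add (hd_2.const_mul (A 0 1 : ℂ))).add_const (B 0 0 : ℂ))
      hO00fun
    simp only [Pi.add_apply] at h
    linear_combination h
  have hD01 : deriv σ τ * ((C 0 0 : ℂ)*τ2 τ + (C 0 1 : ℂ)*τ3 τ + (D 0 1 : ℂ))
      + σ τ * (-((C 0 0 : ℂ)*t τ) + (C 0 1 : ℂ)*(t τ)^2)
      + (-(t (σ τ)) * deriv σ τ) * ((C 1 0 : ℂ)*τ2 τ + (C 1 1 : ℂ)*τ3 τ + (D 1 1 : ℂ))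
      + τ2 (σ τ) * (-((C 1 0 : ℂ)*t τ) + (C 1 1 : ℂ)*(t τ)^2)
      = -((A 0 0 : ℂ)*t τ) + (A 0 1 : ℂ)*(t τ)^2 := by
    have h := derivEq
      ((hd_σ.mul (((hd_2.const_mul (C 0 0 : ℂ)).add (hd_3.const_mul (C 0 1 : ℂ))).add_const
        (D 0 1 : ℂ))).add
       (hd_2σ.mul (((hd_2.const_mul (C 1 0 : ℂ)).add (hd_3.const_mul (C 1 1 : ℂ))).add_const
        (D 1 1 : ℂ))))
      (((hd_2.const_mul (A 0 0 : ℂ)).add (hd_3.const_mul (A 0 1 : ℂ))).add_const (B 0 1 : ℂ))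
      hO01fun
    simp only [Pi.add_apply] at h
    linear_combination h
  have hD10 : (-(t (σ τ)) * deriv σ τ) * ((C 0 0 : ℂ)*τ + (C 0 1 : ℂ)*τ2 τ + (D 0 0 : ℂ))
      + τ2 (σ τ) * ((C 0 0 : ℂ) - (C 0 1 : ℂ)*t τ)
      + ((t (σ τ))^2 * deriv σ τ) * ((C 1 0 : ℂ)*τ + (C 1 1 : ℂ)*τ2 τ + (D 1 0 : ℂ))
      + τ3 (σ τ) * ((C 1 0 : ℂ) - (C 1 1 : ℂ)*t τ)
      = (A 1 0 : ℂ) - (A 1 1 : ℂ)*t τ := by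
    have h := derivEq
      ((hd_2σ.mul (((hd_id.const_mul (C 0 0 : ℂ)).add (hd_2.const_mul (C 0 1 : ℂ))).add_const
        (D 0 0 : ℂ))).add
       (hd_3σ.mul (((hd_id.const_mul (C 1 0 : ℂ)).add (hd_2.const_mul (C 1 1 : ℂ))).add_const
        (D 1 0 : ℂ))))
      (((hd_id.const_mul (A 1 0 : ℂ)).add (hd_2.const_mul (A 1 1 : ℂ))).add_const (B 1 0 : ℂ))
      hO10fun
    simp only [Pi.add_apply] at h
    linear_combination h
  have hD11 : (-(t (σ τ)) * deriv σ τ) * ((C 0 0 : ℂ)*τ2 τ + (C 0 1 : ℂ)*τ3 τ + (D 0 1 : ℂ))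
      + τ2 (σ τ) * (-((C 0 0 : ℂ)*t τ) + (C 0 1 : ℂ)*(t τ)^2)
      + ((t (σ τ))^2 * deriv σ τ) * ((C 1 0 : ℂ)*τ2 τ + (C 1 1 : ℂ)*τ3 τ + (D 1 1 : ℂ))
      + τ3 (σ τ) * (-((C 1 0 : ℂ)*t τ) + (C 1 1 : ℂ)*(t τ)^2)
      = -((A 1 0 : ℂ)*t τ) + (A 1 1 : ℂ)*(t τ)^2 := by
    have h := derivEq
      ((hd_2σ.mul (((hd_2.const_mul (C 0 0 : ℂ)).add (hd_3.const_mul (C 0 1 : ℂ))).add_const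
        (D 0 1 : ℂ))).add
       (hd_3σ.mul (((hd_2.const_mul (C 1 0 : ℂ)).add (hd_3.const_mul (C 1 1 : ℂ))).add_const
        (D 1 1 : ℂ))))
      (((hd_2.const_mul (A 1 0 : ℂ)).add (hd_3.const_mul (A 1 1 : ℂ))).add_const (B 1 1 : ℂ))
      hO11fun
    simp only [Pi.add_apply] at h
    linear_combination h
  -- matrix entries
  have hM00 : (matC C * Tcurve τ2 τ3 τ + matC D) 0 0
      = (C 0 0 : ℂ)*τ + (C 0 1 : ℂ)*τ2 τ + (D 0 0 : ℂ) := by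
    simp [matC, Tcurve, Matrix.mul_apply, Fin.sum_univ_two, Matrix.add_apply,
      Matrix.map_apply] <;> ring
  have hM01 : (matC C * Tcurve τ2 τ3 τ + matC D) 0 1
      = (C 0 0 : ℂ)*τ2 τ + (C 0 1 : ℂ)*τ3 τ + (D 0 1 : ℂ) := by
    simp [matC, Tcurve, Matrix.mul_apply, Fin.sum_univ_two, Matrix.add_apply,
      Matrix.map_apply] <;> ring
  have hM10 : (matC C * Tcurve τ2 τ3 τ + matC D) 1 0
      = (C 1 0 : ℂ)*τ + (C 1 1 : ℂ)*τ2 τ + (D 1 0 : ℂ) := by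
    simp [matC, Tcurve, Matrix.mul_apply, Fin.sum_univ_two, Matrix.add_apply,
      Matrix.map_apply] <;> ring
  have hM11 : (matC C * Tcurve τ2 τ3 τ + matC D) 1 1
      = (C 1 0 : ℂ)*τ2 τ + (C 1 1 : ℂ)*τ3 τ + (D 1 1 : ℂ) := by
    simp [matC, Tcurve, Matrix.mul_apply, Fin.sum_univ_two, Matrix.add_apply,
      Matrix.map_apply] <;> ring
  have hdetn : (matC C * Tcurve τ2 τ3 τ + matC D).det ≠ 0 :=
    ((Matrix.isUnit_iff_isUnit_det _).mp (hinv τ hτ)).ne_zero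
  have hcd' := hcd τ hτ
  rw [hM10, hM11] at hcd'
  rw [Matrix.det_fin_two, hM00, hM01, hM10, hM11] at hdetn
  have hdet' : ((C 0 0 : ℂ)*τ + (C 0 1 : ℂ)*τ2 τ + (D 0 0 : ℂ))
      * ((C 1 0 : ℂ)*τ2 τ + (C 1 1 : ℂ)*τ3 τ + (D 1 1 : ℂ))
      - ((C 0 0 : ℂ)*τ2 τ + (C 0 1 : ℂ)*τ3 τ + (D 0 1 : ℂ))
      * ((C 1 0 : ℂ)*τ + (C 1 1 : ℂ)*τ2 τ + (D 1 0 : ℂ)) ≠ 0 := hdetn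
  obtain ⟨hE, hU⟩ := sigma_algebra_aux
    (A 0 0 : ℂ) (A 0 1 : ℂ) (A 1 0 : ℂ) (A 1 1 : ℂ) (B 0 0 : ℂ) (B 1 0 : ℂ)
    (C 0 0 : ℂ) (C 0 1 : ℂ) (C 1 0 : ℂ) (C 1 1 : ℂ)
    (D 0 0 : ℂ) (D 0 1 : ℂ) (D 1 0 : ℂ) (D 1 1 : ℂ)
    τ (τ2 τ) (τ3 τ) (σ τ) (τ2 (σ τ)) (τ3 (σ τ)) (t τ) (t (σ τ)) (deriv σ τ)
    hS1 hS300 hS301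
    _ _ _ _ rfl rfl rfl rfl
    (hO00fun τ hτ) (hO10fun τ hτ)
    (by linear_combination hD00) (by linear_combination hD01)
    (by linear_combination hD10) (by linear_combination hD11)
    hcd' hdet'
  constructor
  · rw [Matrix.det_fin_two, hM00, hM01, hM10, hM11]
    exact hE
  · rw [hM00, hM01, hM10, hM11]
    exact hU
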